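/- arXiv:2210.02984 — 3 statements merged into one kernel-verified Lean document; each statement's English description precedes it below -/
import Mathlib

section
/- Let M' be a positive integer, let v = (v_x, v_y) ∈ ℝ², and let H : ℤ × ℤ → ℂ be finitely supported. Define ψ : ℝ × ℝ × ℝ → ℂ by ψ(t, x, y) = Σ_{(n,m)} H(n,m) · e^{−2πi t (v_x n + v_y m)} · e^{2πi ((x + t v_x)·Alias_{M'}(n) + (y + t v_y)·Alias_{M'}(m))} (translate the band-limited image by t·v, alias each frequency pair (n,m) to (Alias_{M'}(n), Alias_{M'}(m)), and translate the result back by −t·v). Assume: (i) for every (n,m) in the support of H, Alias_{M'}(n) = n or Alias_{M'}(m) = m; and (ii) for every (n', m') ∈ ℤ², there is at most one (n,m) in the support of H with (Alias_{M'}(n), Alias_{M'}(m)) = (n', m') and (n,m) ≠ (n', m'). Then for every (k, l) the partial derivative ∂ψ/∂t(0, k/M', l/M') exists, and (1/M'²) · Σ_{k=0}^{M'−1} Σ_{l=0}^{M'−1} |∂ψ/∂t(0, k/M', l/M')|² = (2π)² · Σ_{(n,m)} |H(n,m)|² · ( v_x² (Alias_{M'}(n) − n)² + v_y² (Alias_{M'}(m)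 − m)² ). -/
open Complex Real

/-- The aliasing map: `aliasMap fs n` is the representative of `n` modulo `fs`
lying in `[-fs/2, fs/2)`. -/
def aliasMap (fs : ℕ) (n : ℤ) : ℤ :=
  if 2 * (n % (fs : ℤ)) < (fs : ℤ) then n % (fs : ℤ) else n % (fs : ℤ) - (fs : ℤ)

/-- `psi2 M' vx vy H t x y`: translate the band-limited image with Fourier coefficients
`H` by `t·(vx, vy)`, alias each frequency pair `(n, m)` to
`(aliasMap M' n, aliasMap M' m)`, and translate the result back by `−t·(vx, vy)`. -/
noncomputable def psi2 (M' : ℕ) (vx vy : ℝ) (H : ℤ × ℤ →₀ ℂ) (t x y : ℝ) : ℂ :=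
  ∑ p ∈ H.support,
    H p * Complex.exp (-(2 * (π : ℂ) * I * (t : ℂ) *
        ((vx : ℂ) * (p.1 : ℂ) + (vy : ℂ) * (p.2 : ℂ)))) *
      Complex.exp (2 * (π : ℂ) * I *
        (((x : ℂ) + (t : ℂ) * (vx : ℂ)) * (aliasMap M' p.1 : ℂ) +
          ((y : ℂ) + (t : ℂ) * (vy : ℂ)) * (aliasMap M' p.2 : ℂ)))

lemma aliasMap_dvd (fs : ℕ) (n : ℤ) : (fs:ℤ) ∣ (n - aliasMap fs n) := by
  unfold aliasMap
  split
  · exact ⟨n / fs, by rw [Int.emod_def]; ring⟩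
  · exact ⟨n / fs + 1, by rw [Int.emod_def]; ring⟩

lemma aliasMap_range (fs : ℕ) (hfs : 0 < fs) (n : ℤ) :
    -(fs:ℤ) ≤ 2 * aliasMap fs n ∧ 2 * aliasMap fs n < fs := by
  have h0 : (0:ℤ) < fs := by exact_mod_cast hfs
  have h1 := Int.emod_nonneg n (by omega : (fs:ℤ) ≠ 0)
  have h2 := Int.emod_lt_of_pos n h0
  unfold aliasMap; split <;> omega

lemma aliasMap_inj (fs : ℕ) (hfs : 0 < fs) {a b : ℤ}
    (ha : -(fs:ℤ) ≤ 2 * a ∧ 2 * a < fs) (hb : -(fs:ℤ) ≤ 2 * b ∧ 2 * b < fs)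
    (hdvd : (fs:ℤ) ∣ a - b) : a = b := by
  have := Int.eq_zero_of_abs_lt_dvd hdvd (by rw [abs_lt]; omega)
  omega

lemma exp_orth (N : ℕ) (hN : 0 < N) (s : ℤ) :
    ∑ k ∈ Finset.range N, Complex.exp (2 * π * I * ((k : ℂ) * (s : ℂ) / (N : ℂ))) =
      if (N:ℤ) ∣ s then (N:ℂ) else 0 := by
  have hNne : (N:ℂ) ≠ 0 := Nat.cast_ne_zero.mpr hN.ne'
  have h2πI : (2 * (π:ℂ) * I) ≠ 0 :=
    mul_ne_zero (mul_ne_zero two_ne_zero (ofReal_ne_zero.mpr Real.pi_ne_zero)) I_ne_zero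
  set ζ : ℂ := Complex.exp (2 * π * I * ((s:ℂ) / (N:ℂ))) with hζ
  have hterm : ∀ k : ℕ, Complex.exp (2 * π * I * ((k : ℂ) * (s : ℂ) / (N : ℂ))) = ζ ^ k := by
    intro k
    rw [hζ, ← Complex.exp_nat_mul]
    ring_nf
  rw [Finset.sum_congr rfl fun k _ => hterm k]
  have hζN : ζ ^ N = 1 := by
    rw [hζ, ← Complex.exp_nat_mul]
    rw [show (N:ℂ) * (2 * π * I * ((s:ℂ) / (N:ℂ))) = (s:ℂ) * (2 * π * I) by
      field_simp]
    exact Complex.exp_int_mul_two_pi_mul_I s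
  by_cases hdvd : (N:ℤ) ∣ s
  · obtain ⟨c, hc⟩ := id hdvd
    have hone : ζ = 1 := by
      rw [hζ, show 2 * (π:ℂ) * I * ((s:ℂ) / (N:ℂ)) = (c:ℂ) * (2 * π * I) by
        rw [hc]; push_cast; field_simp]
      exact Complex.exp_int_mul_two_pi_mul_I c
    simp [hone, hdvd]
  · have hζ1 : ζ ≠ 1 := by
      intro h
      rw [hζ, Complex.exp_eq_one_iff] at h
      obtain ⟨c, hc⟩ := h
      have hs : (s:ℂ) / (N:ℂ) = (c:ℂ) := mul_left_cancel₀ h2πI (by rw [hc]; ring)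
      rw [div_eq_iff hNne] at hs
      exact hdvd ⟨c, by exact_mod_cast (by rw [hs]; ring : (s:ℂ) = (N:ℂ) * (c:ℂ))⟩
    rw [geom_sum_eq hζ1, hζN]
    simp [hdvd]


lemma sum4_comm {α β γ δ M : Type*} [AddCommMonoid M]
    (A : Finset α) (B : Finset β) (s : Finset γ) (t : Finset δ)
    (F : α → β → γ → δ → M) :
    ∑ k ∈ A, ∑ l ∈ B, ∑ p ∈ s, ∑ q ∈ t, F k l p q =
    ∑ p ∈ s, ∑ q ∈ t, ∑ k ∈ A, ∑ l ∈ B, F k l p q := by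
  calc ∑ k ∈ A, ∑ l ∈ B, ∑ p ∈ s, ∑ q ∈ t, F k l p q
      = ∑ k ∈ A, ∑ p ∈ s, ∑ l ∈ B, ∑ q ∈ t, F k l p q :=
        Finset.sum_congr rfl fun k _ => Finset.sum_comm
    _ = ∑ k ∈ A, ∑ p ∈ s, ∑ q ∈ t, ∑ l ∈ B, F k l p q :=
        Finset.sum_congr rfl fun k _ => Finset.sum_congr rfl fun p _ => Finset.sum_comm
    _ = ∑ p ∈ s, ∑ k ∈ A, ∑ q ∈ t, ∑ l ∈ B, F k l p q := Finset.sum_comm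
    _ = ∑ p ∈ s, ∑ q ∈ t, ∑ k ∈ A, ∑ l ∈ B, F k l p q :=
        Finset.sum_congr rfl fun p _ => Finset.sum_comm

lemma sum_normsq (M' : ℕ) (hM : 0 < M') (d : ℤ × ℤ → ℂ) (s : Finset (ℤ × ℤ))
    (hzero : ∀ p ∈ s, ∀ q ∈ s, p ≠ q → aliasMap M' p.1 = aliasMap M' q.1 →
      aliasMap M' p.2 = aliasMap M' q.2 → d p * (starRingEnd ℂ) (d q) = 0) :
    ∑ k ∈ Finset.range M', ∑ l ∈ Finset.range M',
      Complex.normSq (∑ p ∈ s, d p * Complex.exp (2 * π * I *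
        ((((k:ℝ)/(M':ℝ) : ℝ):ℂ) * (aliasMap M' p.1 : ℂ) +
         (((l:ℝ)/(M':ℝ) : ℝ):ℂ) * (aliasMap M' p.2 : ℂ)))) =
    (M':ℝ)^2 * ∑ p ∈ s, Complex.normSq (d p) := by
  have hMC : ((M':ℂ)) ≠ 0 := Nat.cast_ne_zero.mpr hM.ne'
  apply Complex.ofReal_inj.mp
  push_cast [← Complex.mul_conj]
  have step1 : ∀ k l : ℕ,
      (∑ p ∈ s, d p * Complex.exp (2 * π * I *
        ((k:ℂ)/(M':ℂ) * (aliasMap M' p.1 : ℂ) + (l:ℂ)/(M':ℂ) * (aliasMap M' p.2 : ℂ)))) *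
      (starRingEnd ℂ) (∑ p ∈ s, d p * Complex.exp (2 * π * I *
        ((k:ℂ)/(M':ℂ) * (aliasMap M' p.1 : ℂ) + (l:ℂ)/(M':ℂ) * (aliasMap M' p.2 : ℂ)))) =
      ∑ p ∈ s, ∑ q ∈ s, (d p * (starRingEnd ℂ) (d q)) *
        (Complex.exp (2 * π * I * ((k : ℂ) * ((aliasMap M' p.1 - aliasMap M' q.1 : ℤ) : ℂ) / (M' : ℂ))) *
         Complex.exp (2 * π * I * ((l : ℂ) * ((aliasMap M' p.2 - aliasMap M' q.2 : ℤ) : ℂ) / (M' : ℂ)))) := by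
    intro k l
    rw [map_sum, Finset.sum_mul_sum]
    refine Finset.sum_congr rfl fun p _ => Finset.sum_congr rfl fun q _ => ?_
    rw [map_mul, ← Complex.exp_conj]
    have hconj : (starRingEnd ℂ) (2 * (π:ℂ) * I *
        ((k:ℂ)/(M':ℂ) * (aliasMap M' q.1 : ℂ) + (l:ℂ)/(M':ℂ) * (aliasMap M' q.2 : ℂ))) =
        -(2 * (π:ℂ) * I *
        ((k:ℂ)/(M':ℂ) * (aliasMap M' q.1 : ℂ) + (l:ℂ)/(M':ℂ) * (aliasMap M' q.2 : ℂ))) := by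
      simp only [map_mul, map_add, map_div₀, Complex.conj_I, Complex.conj_ofReal,
        map_ofNat, map_intCast, map_natCast]
      ring
    rw [hconj]
    rw [show (d p * Complex.exp (2 * π * I *
        ((k:ℂ)/(M':ℂ) * (aliasMap M' p.1 : ℂ) + (l:ℂ)/(M':ℂ) * (aliasMap M' p.2 : ℂ)))) *
        ((starRingEnd ℂ) (d q) * Complex.exp (-(2 * (π:ℂ) * I *
        ((k:ℂ)/(M':ℂ) * (aliasMap M' q.1 : ℂ) + (l:ℂ)/(M':ℂ) * (aliasMap M' q.2 : ℂ))))) =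
        (d p * (starRingEnd ℂ) (d q)) *
        (Complex.exp (2 * π * I *
          ((k:ℂ)/(M':ℂ) * (aliasMap M' p.1 : ℂ) + (l:ℂ)/(M':ℂ) * (aliasMap M' p.2 : ℂ))) *
         Complex.exp (-(2 * (π:ℂ) * I *
          ((k:ℂ)/(M':ℂ) * (aliasMap M' q.1 : ℂ) + (l:ℂ)/(M':ℂ) * (aliasMap M' q.2 : ℂ))))) from
      by ring]
    rw [← Complex.exp_add, ← Complex.exp_add]
    congr 1
    push_cast
    field_simp
    ring
  rw [Finset.sum_congr rfl fun k _ => Finset.sum_congr rfl fun l _ => step1 k l, sum4_comm]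
  have step2 : ∀ p ∈ s, ∀ q ∈ s,
      (∑ k ∈ Finset.range M', ∑ l ∈ Finset.range M',
        (d p * (starRingEnd ℂ) (d q)) *
          (Complex.exp (2 * π * I * ((k : ℂ) * ((aliasMap M' p.1 - aliasMap M' q.1 : ℤ) : ℂ) / (M' : ℂ))) *
           Complex.exp (2 * π * I * ((l : ℂ) * ((aliasMap M' p.2 - aliasMap M' q.2 : ℤ) : ℂ) / (M' : ℂ))))) =
      (d p * (starRingEnd ℂ) (d q)) *
        ((if (M':ℤ) ∣ (aliasMap M' p.1 - aliasMap M' q.1) then (M':ℂ) else 0) *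
         (if (M':ℤ) ∣ (aliasMap M' p.2 - aliasMap M' q.2) then (M':ℂ) else 0)) := by
    intro p _ q _
    rw [← exp_orth M' hM (aliasMap M' p.1 - aliasMap M' q.1),
        ← exp_orth M' hM (aliasMap M' p.2 - aliasMap M' q.2)]
    calc ∑ k ∈ Finset.range M', ∑ l ∈ Finset.range M',
          (d p * (starRingEnd ℂ) (d q)) *
          (Complex.exp (2 * π * I * ((k : ℂ) * ((aliasMap M' p.1 - aliasMap M' q.1 : ℤ) : ℂ) / (M' : ℂ))) *
           Complex.exp (2 * π * I * ((l : ℂ) * ((aliasMap M' p.2 - aliasMap M' q.2 : ℤ) : ℂ) / (M' : ℂ))))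
        = ∑ k ∈ Finset.range M',
            (d p * (starRingEnd ℂ) (d q)) *
            Complex.exp (2 * π * I * ((k : ℂ) * ((aliasMap M' p.1 - aliasMap M' q.1 : ℤ) : ℂ) / (M' : ℂ))) *
            ∑ l ∈ Finset.range M',
              Complex.exp (2 * π * I * ((l : ℂ) * ((aliasMap M' p.2 - aliasMap M' q.2 : ℤ) : ℂ) / (M' : ℂ))) := by
          refine Finset.sum_congr rfl fun k _ => ?_
          rw [Finset.mul_sum]
          exact Finset.sum_congr rfl fun l _ => by ring
      _ = (∑ k ∈ Finset.range M',
            (d p * (starRingEnd ℂ) (d q)) *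
            Complex.exp (2 * π * I * ((k : ℂ) * ((aliasMap M' p.1 - aliasMap M' q.1 : ℤ) : ℂ) / (M' : ℂ)))) *
            ∑ l ∈ Finset.range M',
              Complex.exp (2 * π * I * ((l : ℂ) * ((aliasMap M' p.2 - aliasMap M' q.2 : ℤ) : ℂ) / (M' : ℂ))) := by
          rw [Finset.sum_mul]
      _ = _ := by rw [← Finset.mul_sum, mul_assoc]
  rw [Finset.sum_congr rfl fun p hp => Finset.sum_congr rfl fun q hq => step2 p hp q hq]
  have step3 : ∀ p ∈ s,
      (∑ q ∈ s, (d p * (starRingEnd ℂ) (d q)) *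
        ((if (M':ℤ) ∣ (aliasMap M' p.1 - aliasMap M' q.1) then (M':ℂ) else 0) *
         (if (M':ℤ) ∣ (aliasMap M' p.2 - aliasMap M' q.2) then (M':ℂ) else 0))) =
      (d p * (starRingEnd ℂ) (d p)) * ((M':ℂ) * (M':ℂ)) := by
    intro p hp
    rw [Finset.sum_eq_single p]
    · simp
    · intro q hq hqp
      by_cases h1 : (M':ℤ) ∣ (aliasMap M' p.1 - aliasMap M' q.1)
      · by_cases h2 : (M':ℤ) ∣ (aliasMap M' p.2 - aliasMap M' q.2)
        · have e1 : aliasMap M' p.1 = aliasMap M' q.1 :=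
            aliasMap_inj M' hM (aliasMap_range M' hM _) (aliasMap_range M' hM _) h1
          have e2 : aliasMap M' p.2 = aliasMap M' q.2 :=
            aliasMap_inj M' hM (aliasMap_range M' hM _) (aliasMap_range M' hM _) h2
          rw [hzero p hp q hq (Ne.symm hqp) e1 e2, zero_mul]
        · simp [h2]
      · simp [h1]
    · intro h; exact absurd hp h
  rw [Finset.sum_congr rfl fun p hp => step3 p hp, Finset.mul_sum]
  exact Finset.sum_congr rfl fun p _ => by push_cast; ring

noncomputable def dcoef (M' : ℕ) (vx vy : ℝ) (H : ℤ × ℤ →₀ ℂ) (p : ℤ × ℤ) : ℂ :=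
  H p * (2 * π * I) * ((vx:ℂ) * ((aliasMap M' p.1 - p.1 : ℤ):ℂ) +
    (vy:ℂ) * ((aliasMap M' p.2 - p.2 : ℤ):ℂ))

lemma psi2_hasDerivAt (M' : ℕ) (vx vy : ℝ) (H : ℤ × ℤ →₀ ℂ) (x y : ℝ) :
    HasDerivAt (fun t => psi2 M' vx vy H t x y)
      (∑ p ∈ H.support, dcoef M' vx vy H p *
        Complex.exp (2 * π * I *
          ((x:ℂ) * (aliasMap M' p.1 : ℂ) + (y:ℂ) * (aliasMap M' p.2 : ℂ)))) 0 := by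
  unfold psi2
  apply HasDerivAt.fun_sum
  intro p _
  set a : ℂ := (aliasMap M' p.1 : ℂ) with ha
  set b : ℂ := (aliasMap M' p.2 : ℂ) with hb
  set A₁ : ℂ := -(2 * π * I * ((vx:ℂ) * (p.1:ℂ) + (vy:ℂ) * (p.2:ℂ))) with hA₁
  set A₂ : ℂ := 2 * π * I * ((vx:ℂ) * a + (vy:ℂ) * b) with hA₂
  set B : ℂ := 2 * π * I * ((x:ℂ) * a + (y:ℂ) * b) with hB
  have h1 : HasDerivAt (fun z : ℂ => A₁ * z) A₁ ((0:ℝ):ℂ) := by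
    simpa using (hasDerivAt_id (((0:ℝ):ℂ))).const_mul A₁
  have h2 : HasDerivAt (fun z : ℂ => B + A₂ * z) A₂ ((0:ℝ):ℂ) := by
    simpa using ((hasDerivAt_id (((0:ℝ):ℂ))).const_mul A₂).const_add B
  have prod := ((h1.cexp.const_mul (H p)).fun_mul h2.cexp).comp_ofReal
  have hfun : (fun t : ℝ => H p * Complex.exp (A₁ * (t:ℂ)) * Complex.exp (B + A₂ * (t:ℂ)))
      = (fun t : ℝ =>
        H p * Complex.exp (-(2 * (π : ℂ) * I * (t : ℂ) *
            ((vx : ℂ) * (p.1 : ℂ) + (vy : ℂ) * (p.2 : ℂ)))) *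
          Complex.exp (2 * (π : ℂ) * I *
            (((x : ℂ) + (t : ℂ) * (vx : ℂ)) * a + ((y : ℂ) + (t : ℂ) * (vy : ℂ)) * b))) := by
    funext t
    rw [show A₁ * (t:ℂ) = -(2 * (π : ℂ) * I * (t : ℂ) *
        ((vx : ℂ) * (p.1 : ℂ) + (vy : ℂ) * (p.2 : ℂ))) by rw [hA₁]; ring,
      show B + A₂ * (t:ℂ) = 2 * (π : ℂ) * I *
        (((x : ℂ) + (t : ℂ) * (vx : ℂ)) * a + ((y : ℂ) + (t : ℂ) * (vy : ℂ)) * b) by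
        rw [hB, hA₂]; ring]
  rw [hfun] at prod
  convert prod using 1
  · exact rfl
  simp only [Complex.ofReal_zero, mul_zero, add_zero, Complex.exp_zero, mul_one, one_mul]
  rw [dcoef, hA₁, hA₂, hB, ha, hb]
  push_cast
  ring

/-- Translation equivariance error of aliasing (2d): if (i) every frequency pair in the
support of `H` has at least one unaliased component, and (ii) each output frequency
pair has at most one input pair other than itself aliasing onto it, then the mean over
the `M' × M'` sampling grid of the squared modulus of `∂ψ/∂t(0,·,·)` equals
`(2π)² ∑ₙₘ |H(n,m)|² (vx² (aliasMap M' n − n)² + vy² (aliasMap M' m − m)²)`. -/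
theorem aliasing_translation_equivariance_error_2d
    (M' : ℕ) (hM : 0 < M') (vx vy : ℝ) (H : ℤ × ℤ →₀ ℂ)
    (hdiag : ∀ p ∈ H.support, aliasMap M' p.1 = p.1 ∨ aliasMap M' p.2 = p.2)
    (hfib : ∀ q : ℤ × ℤ, ∀ p₁ ∈ H.support, ∀ p₂ ∈ H.support,
      (aliasMap M' p₁.1, aliasMap M' p₁.2) = q → p₁ ≠ q →
      (aliasMap M' p₂.1, aliasMap M' p₂.2) = q → p₂ ≠ q → p₁ = p₂) :
    (∀ k l : ℕ,
      DifferentiableAt ℝ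
        (fun t => psi2 M' vx vy H t ((k : ℝ) / (M' : ℝ)) ((l : ℝ) / (M' : ℝ))) 0) ∧
    (1 / (M' : ℝ) ^ 2) * ∑ k ∈ Finset.range M', ∑ l ∈ Finset.range M',
        ‖deriv
          (fun t => psi2 M' vx vy H t ((k : ℝ) / (M' : ℝ)) ((l : ℝ) / (M' : ℝ))) 0‖ ^ 2 =
      (2 * π) ^ 2 * ∑ p ∈ H.support, ‖H p‖ ^ 2 *
        (vx ^ 2 * ((aliasMap M' p.1 - p.1 : ℤ) : ℝ) ^ 2 +
          vy ^ 2 * ((aliasMap M' p.2 - p.2 : ℤ) : ℝ) ^ 2) := by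
  have hx := fun (k l : ℕ) => psi2_hasDerivAt M' vx vy H ((k:ℝ)/(M':ℝ)) ((l:ℝ)/(M':ℝ))
  have hnorm : ∀ z : ℂ, ‖z‖^2 = Complex.normSq z := fun z => by
    rw [Complex.sq_norm]
  have hzero : ∀ p ∈ H.support, ∀ q ∈ H.support, p ≠ q →
      aliasMap M' p.1 = aliasMap M' q.1 → aliasMap M' p.2 = aliasMap M' q.2 →
      dcoef M' vx vy H p * (starRingEnd ℂ) (dcoef M' vx vy H q) = 0 := by
    intro p hp q hq hpq e1 e2
    by_cases hpr : p = (aliasMap M' p.1, aliasMap M' p.2)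
    · have h1 : aliasMap M' p.1 = p.1 := by conv_rhs => rw [hpr]
      have h2 : aliasMap M' p.2 = p.2 := by conv_rhs => rw [hpr]
      have : dcoef M' vx vy H p = 0 := by
        rw [dcoef, h1, h2]; simp
      rw [this, zero_mul]
    · by_cases hqr : q = (aliasMap M' p.1, aliasMap M' p.2)
      · have h1 : aliasMap M' q.1 = q.1 := by rw [← e1]; conv_rhs => rw [hqr]
        have h2 : aliasMap M' q.2 = q.2 := by rw [← e2]; conv_rhs => rw [hqr]
        have : dcoef M' vx vy H q = 0 := by
          rw [dcoef, h1, h2]; simp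
        rw [this, map_zero, mul_zero]
      · exact absurd
          (hfib (aliasMap M' p.1, aliasMap M' p.2) p hp q hq rfl hpr
            (by rw [← e1, ← e2]) hqr) hpq
  constructor
  · intro k l; exact (hx k l).differentiableAt
  · have hderiv : ∀ k l : ℕ,
        deriv (fun t => psi2 M' vx vy H t ((k:ℝ)/(M':ℝ)) ((l:ℝ)/(M':ℝ))) 0
          = ∑ p ∈ H.support, dcoef M' vx vy H p * Complex.exp (2 * π * I *
              ((((k:ℝ)/(M':ℝ) : ℝ):ℂ) * (aliasMap M' p.1 : ℂ) +
               (((l:ℝ)/(M':ℝ) : ℝ):ℂ) * (aliasMap M' p.2 : ℂ))) :=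
      fun k l => (hx k l).deriv
    simp_rw [hderiv, hnorm]
    rw [sum_normsq M' hM _ _ hzero]
    have hM2 : ((M':ℝ))^2 ≠ 0 := pow_ne_zero 2 (Nat.cast_ne_zero.mpr hM.ne')
    rw [← mul_assoc, one_div, inv_mul_cancel₀ hM2, one_mul, Finset.mul_sum]
    refine Finset.sum_congr rfl fun p hp => ?_
    rw [dcoef, show (vx:ℂ) * ((aliasMap M' p.1 - p.1 : ℤ):ℂ) +
          (vy:ℂ) * ((aliasMap M' p.2 - p.2 : ℤ):ℂ)
        = ((vx * ((aliasMap M' p.1 - p.1 : ℤ):ℝ) +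
            vy * ((aliasMap M' p.2 - p.2 : ℤ):ℝ) : ℝ) : ℂ) by push_cast; ring,
      show (2*(π:ℂ)*I) = (((2*π : ℝ)):ℂ) * I by push_cast; ring,
    ]
    simp only [Complex.normSq_mul, Complex.normSq_ofReal, Complex.normSq_I]
    rcases hdiag p hp with h | h <;> rw [h, sub_self] <;> push_cast <;> ring
end

section
/- Let V₁, V₂, V₃ be real normed vector spaces. Let A : ℝ → (V₁ →L[ℝ] V₁), B, B̄ : ℝ → (V₂ →L[ℝ] V₂), and C̄ : ℝ → (V₃ →L[ℝ] V₃) be curves of continuous linear maps, each differentiable at 0, with A(0), B(0), B̄(0), C̄(0) all equal to the identity, and with B(t) ∘ B̄(t) = id for all t in a neighborhood of 0. Let x ∈ V₁, let h : V₁ → V₂ be differentiable at x, and let f : V₂ → V₃ be differentiable at h(x). Define the Lie derivatives (L h)(x) := d/dt|_{t=0} [ B̄(t) ( h (A(t) x) ) ], (L f)(y) := d/dt|_{t=0} [ C̄(t) ( f (B(t) y) ) ], and (L (f ∘ h))(x) := d/dt|_{t=0} [ C̄(t) ( f ( h (A(t) x) ) ) ]. Then all three derivatives exist and (L (f ∘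 h))(x) = (L f)(h(x)) + (Df)|_{h(x)} ( (L h)(x) ), where (Df)|_{h(x)} is the Fréchet derivative of f at h(x). -/
/-- Chain rule for the Lie derivative: for curves of continuous linear maps acting on
input and output spaces (equal to the identity at `t = 0`, with `B̄` inverse to `B`
near `0`), the Lie derivative of a composition `f ∘ h` at `x` equals the Lie derivative
of `f` at `h x` plus the Fréchet derivative of `f` at `h x` applied to the Lie
derivative of `h` at `x`. -/
theorem lie_derivative_chain_rule
    {V₁ V₂ V₃ : Type*} [NormedAddCommGroup V₁] [NormedSpace ℝ V₁]
    [NormedAddCommGroup V₂] [NormedSpace ℝ V₂]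
    [NormedAddCommGroup V₃] [NormedSpace ℝ V₃]
    (A : ℝ → V₁ →L[ℝ] V₁) (B Bbar : ℝ → V₂ →L[ℝ] V₂) (Cbar : ℝ → V₃ →L[ℝ] V₃)
    (hA : DifferentiableAt ℝ A 0) (hB : DifferentiableAt ℝ B 0)
    (hBbar : DifferentiableAt ℝ Bbar 0) (hCbar : DifferentiableAt ℝ Cbar 0)
    (hA0 : A 0 = ContinuousLinearMap.id ℝ V₁)
    (hB0 : B 0 = ContinuousLinearMap.id ℝ V₂)
    (hBbar0 : Bbar 0 = ContinuousLinearMap.id ℝ V₂)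
    (hCbar0 : Cbar 0 = ContinuousLinearMap.id ℝ V₃)
    (hinv : ∀ᶠ t in nhds (0 : ℝ), (B t).comp (Bbar t) = ContinuousLinearMap.id ℝ V₂)
    (x : V₁) (h : V₁ → V₂) (f : V₂ → V₃)
    (hh : DifferentiableAt ℝ h x) (hf : DifferentiableAt ℝ f (h x)) :
    DifferentiableAt ℝ (fun t => Bbar t (h (A t x))) 0 ∧
    DifferentiableAt ℝ (fun t => Cbar t (f (B t (h x)))) 0 ∧
    DifferentiableAt ℝ (fun t => Cbar t (f (h (A t x)))) 0 ∧
    deriv (fun t => Cbar t (f (h (A t x)))) 0 =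
      deriv (fun t => Cbar t (f (B t (h x)))) 0 +
        fderiv ℝ f (h x) (deriv (fun t => Bbar t (h (A t x))) 0) := by
  -- the inner curve g
  set g : ℝ → V₂ := fun t => Bbar t (h (A t x)) with hg_def
  have hAx : DifferentiableAt ℝ (fun t => A t x) 0 :=
    hA.clm_apply (differentiableAt_const x)
  have hA0x : A 0 x = x := by rw [hA0]; rfl
  have hhA : DifferentiableAt ℝ (fun t => h (A t x)) 0 := by
    have hh' : DifferentiableAt ℝ h (A 0 x) := by rwa [hA0x]
    exact hh'.comp 0 hAx
  have hg : DifferentiableAt ℝ g 0 := hBbar.clm_apply hhA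
  have hg0 : g 0 = h x := by simp [hg_def, hBbar0, hA0x]
  -- the outer map F
  set F : ℝ × V₂ → V₃ := fun p => Cbar p.1 (f (B p.1 p.2)) with hF_def
  have hfst : DifferentiableAt ℝ (fun p : ℝ × V₂ => p.1) (0, h x) :=
    differentiableAt_fst
  have hu : DifferentiableAt ℝ (fun p : ℝ × V₂ => B p.1 p.2) (0, h x) :=
    (hB.comp (0, h x) hfst).clm_apply differentiableAt_snd
  have hu0 : B (0 : ℝ) (h x) = h x := by rw [hB0]; rfl
  have hfu : DifferentiableAt ℝ (fun p : ℝ × V₂ => f (B p.1 p.2)) (0, h x) := by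
    have hf' : DifferentiableAt ℝ f (B 0 (h x)) := by rwa [hu0]
    exact hf'.comp (0, h x) hu
  have hF : DifferentiableAt ℝ F (0, h x) :=
    (hCbar.comp (0, h x) hfst).clm_apply hfu
  set DF := fderiv ℝ F (0, h x) with hDF_def
  have hFd : HasFDerivAt F DF (0, h x) := hF.hasFDerivAt
  -- curve t ↦ (t, g t)
  have hcurve : HasDerivAt (fun t : ℝ => (t, g t)) (1, deriv g 0) 0 :=
    (hasDerivAt_id (0:ℝ)).prodMk hg.hasDerivAt
  have hFd' : HasFDerivAt F DF (0, g 0) := by rw [hg0]; exact hFd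
  have hcomp : HasDerivAt (fun t : ℝ => F (t, g t)) (DF (1, deriv g 0)) 0 :=
    by have := hFd'.comp_hasDerivAt 0 hcurve; exact this
  -- the second curve t ↦ F (t, h x)
  have hcurve2 : HasDerivAt (fun t : ℝ => (t, h x)) ((1 : ℝ), (0 : V₂)) 0 :=
    (hasDerivAt_id (0:ℝ)).prodMk (hasDerivAt_const 0 (h x))
  have hcomp2 : HasDerivAt (fun t : ℝ => F (t, h x)) (DF (1, 0)) 0 :=
    by have := hFd.comp_hasDerivAt (0:ℝ) hcurve2; exact this
  -- f equals y ↦ F (0, y)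
  have hfF : HasFDerivAt f (DF.comp ((ContinuousLinearMap.inr ℝ ℝ V₂))) (h x) := by
    have hincl : HasFDerivAt (fun y : V₂ => ((0 : ℝ), y))
        (ContinuousLinearMap.inr ℝ ℝ V₂) (h x) :=
      (ContinuousLinearMap.inr ℝ ℝ V₂).hasFDerivAt
    have := hFd.comp (h x) hincl
    have heq : (fun y : V₂ => F (0, y)) = f := by
      funext y; simp [hF_def, hB0, hCbar0]
    rw [← heq]
    exact this.congr_of_eventuallyEq (by filter_upwards with y; simp [Function.comp])
  have hfderiv : ∀ v : V₂, fderiv ℝ f (h x) v = DF (0, v) := by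
    intro v
    rw [hfF.fderiv]
    rfl
  -- eventual equality of the main curve with F (t, g t)
  have hev : (fun t => Cbar t (f (h (A t x)))) =ᶠ[nhds (0 : ℝ)]
      (fun t => F (t, g t)) := by
    filter_upwards [hinv] with t ht
    have : B t (Bbar t (h (A t x))) = h (A t x) := by
      have := congrArg (fun L : V₂ →L[ℝ] V₂ => L (h (A t x))) ht
      simpa using this
    simp [hF_def, hg_def, this]
  have hdiff3 : DifferentiableAt ℝ (fun t => Cbar t (f (h (A t x)))) 0 :=
    hcomp.differentiableAt.congr_of_eventuallyEq hev
  have hderiv3 : deriv (fun t => Cbar t (f (h (A t x)))) 0 = DF (1, deriv g 0) := by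
    rw [hev.deriv_eq, hcomp.deriv]
  refine ⟨hg, hcomp2.differentiableAt, hdiff3, ?_⟩
  rw [hderiv3, hcomp2.deriv, hfderiv]
  rw [← map_add]
  norm_num
end

section
/- Let N ≥ 1, let V₀, V₁, …, V_N be real normed vector spaces, and for each i = 1,…,N let fᵢ : V_{i−1} → Vᵢ. For each i = 0,…,N let ρᵢ, ρ̄ᵢ : ℝ → (Vᵢ →L[ℝ] Vᵢ) be curves of continuous linear maps, each differentiable at 0, with ρᵢ(0) = ρ̄ᵢ(0) = id and ρᵢ(t) ∘ ρ̄ᵢ(t) = id for all t in a neighborhood of 0. Fix x ∈ V₀ and set z₀ = x and zᵢ = fᵢ(z_{i−1}) for i = 1,…,N. Assume each fᵢ is differentiable at z_{i−1}. Define (L fᵢ)(y) := d/dt|_{t=0} [ ρ̄ᵢ(t) ( fᵢ (ρ_{i−1}(t) y) ) ] and L(f_N ∘ ⋯ ∘ f₁)(x) := d/dt|_{t=0} [ ρ̄_N(t) ( (f_N ∘ ⋯ ∘ f₁)(ρ₀(t) x) ) ]. Then all these derivatives exist and L(f_N ∘ ⋯ ∘ f₁)(x) = Σ_{i=1}^{N}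 D(f_N ∘ ⋯ ∘ f_{i+1})|_{zᵢ} ( (L fᵢ)(z_{i−1}) ), where D(f_N ∘ ⋯ ∘ f_{i+1})|_{zᵢ} denotes the Fréchet derivative of the composition of the layers after layer i, evaluated at zᵢ (interpreted as the identity map when i = N). -/
/-- Layerwise decomposition of the Lie derivative of a composition of layers
`f_N ∘ ⋯ ∘ f₁` (here indexed `f 0, …, f (N-1)` with `f i : V i → V (i+1)`): the Lie
derivative of the whole network equals the sum over layers of the layer's Lie
derivative propagated through the Jacobians of the subsequent layers.
`z i` is the activation after `i` layers, and `F i` is the composition of the layers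
after position `i` (so `F N = id` and `F i = F (i+1) ∘ f i` for `i < N`). -/
theorem lie_derivative_layerwise
    (N : ℕ) (hN : 1 ≤ N) (V : ℕ → Type*) [∀ i, NormedAddCommGroup (V i)]
    [∀ i, NormedSpace ℝ (V i)]
    (f : ∀ i, V i → V (i + 1))
    (ρ ρbar : ∀ i, ℝ → V i →L[ℝ] V i)
    (hρd : ∀ i, DifferentiableAt ℝ (ρ i) 0)
    (hρbard : ∀ i, DifferentiableAt ℝ (ρbar i) 0)
    (hρ0 : ∀ i, ρ i 0 = ContinuousLinearMap.id ℝ (V i))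
    (hρbar0 : ∀ i, ρbar i 0 = ContinuousLinearMap.id ℝ (V i))
    (hinv : ∀ i, ∀ᶠ t in nhds (0 : ℝ),
      (ρ i t).comp (ρbar i t) = ContinuousLinearMap.id ℝ (V i))
    (x : V 0) (z : ∀ i, V i) (hz0 : z 0 = x)
    (hz : ∀ i, z (i + 1) = f i (z i))
    (hf : ∀ i, DifferentiableAt ℝ (f i) (z i))
    (F : ∀ i, V i → V N)
    (hFN : F N = id)
    (hF : ∀ i < N, F i = F (i + 1) ∘ f i) :
    (∀ i < N, DifferentiableAt ℝ (fun t => ρbar (i + 1) t (f i (ρ i t (z i)))) 0) ∧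
    DifferentiableAt ℝ (fun t => ρbar N t (F 0 (ρ 0 t x))) 0 ∧
    deriv (fun t => ρbar N t (F 0 (ρ 0 t x))) 0 =
      ∑ i ∈ Finset.range N,
        fderiv ℝ (F (i + 1)) (z (i + 1))
          (deriv (fun t => ρbar (i + 1) t (f i (ρ i t (z i)))) 0) := by
  set A := fun i => deriv (ρ i) 0 with hA
  set B := fun i => deriv (ρbar i) 0 with hB
  -- B i = - A i
  have hBA : ∀ i, B i = - A i := by
    intro i
    have h1 : HasDerivAt (fun t => (ρ i t).comp (ρbar i t))
        ((A i).comp (ρbar i 0) + (ρ i 0).comp (B i)) 0 :=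
      ((hρd i).hasDerivAt).clm_comp ((hρbard i).hasDerivAt)
    have h2 : deriv (fun t => (ρ i t).comp (ρbar i t)) 0 = 0 := by
      rw [Filter.EventuallyEq.deriv_eq (hinv i)]
      simp
    have h3 := h1.deriv
    rw [h2, hρ0, hρbar0] at h3
    simp only [ContinuousLinearMap.comp_id, ContinuousLinearMap.id_comp] at h3
    have : A i + B i = 0 := h3.symm
    linear_combination (norm := abel) this
  -- point simplifications
  have hρz : ∀ i (y : V i), HasDerivAt (fun t => ρ i t y) (A i y) 0 := by
    intro i y
    have := ((hρd i).hasDerivAt).clm_apply (hasDerivAt_const (0:ℝ) y)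
    simpa using this
  -- layer Lie derivatives
  have hlayer : ∀ i, HasDerivAt (fun t => ρbar (i+1) t (f i (ρ i t (z i))))
      (fderiv ℝ (f i) (z i) (A i (z i)) - A (i+1) (z (i+1))) 0 := by
    intro i
    have h0 : ρ i 0 (z i) = z i := by rw [hρ0]; rfl
    have hfz : HasDerivAt (fun t => f i (ρ i t (z i)))
        (fderiv ℝ (f i) (z i) (A i (z i))) 0 := by
      have hfd : HasFDerivAt (f i) (fderiv ℝ (f i) (z i)) ((fun t => ρ i t (z i)) 0) := by
        rw [show (fun t => ρ i t (z i)) 0 = z i from h0]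
        exact (hf i).hasFDerivAt
      exact hfd.comp_hasDerivAt 0 (hρz i (z i))
    have h4 := ((hρbard (i+1)).hasDerivAt).clm_apply hfz
    have h5 : f i (ρ i 0 (z i)) = z (i+1) := by rw [h0, hz i]
    rw [h5, hρbar0, show deriv (ρbar (i+1)) 0 = B (i+1) from rfl, hBA] at h4
    simpa [sub_eq_add_neg, add_comm] using h4
  -- facts about F
  have key : ∀ k i, i + k = N → DifferentiableAt ℝ (F i) (z i) ∧ F i (z i) = z N := by
    intro k
    induction k with
    | zero =>
      intro i hi
      have : i = N := by omega
      subst this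
      rw [hFN]
      exact ⟨differentiableAt_id, rfl⟩
    | succ k ih =>
      intro i hi
      have hiN : i < N := by omega
      obtain ⟨hd1, he1⟩ := ih (i+1) (by omega)
      rw [hF i hiN]
      constructor
      · refine DifferentiableAt.comp _ ?_ (hf i)
        rw [← hz i] at *
        exact hd1
      · simp only [Function.comp_apply, ← hz i, he1]
  have hchain : ∀ i, i < N → fderiv ℝ (F i) (z i) =
      (fderiv ℝ (F (i+1)) (z (i+1))).comp (fderiv ℝ (f i) (z i)) := by
    intro i hiN
    rw [hF i hiN]
    have hd1 : DifferentiableAt ℝ (F (i+1)) (f i (z i)) := by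
      rw [← hz i]; exact (key (N - (i+1)) (i+1) (by omega)).1
    rw [fderiv_comp (z i) hd1 (hf i), hz i]
  -- network Lie derivative
  have hFdiff0 : DifferentiableAt ℝ (F 0) (z 0) := (key N 0 (by omega)).1
  have hF0zN : F 0 (z 0) = z N := (key N 0 (by omega)).2
  have hnet : HasDerivAt (fun t => ρbar N t (F 0 (ρ 0 t x)))
      (fderiv ℝ (F 0) (z 0) (A 0 (z 0)) - A N (z N)) 0 := by
    have h0 : ρ 0 0 x = (z 0 : V 0) := by rw [hρ0, hz0]; rfl
    have hfz : HasDerivAt (fun t => F 0 (ρ 0 t x))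
        (fderiv ℝ (F 0) (z 0) (A 0 (z 0))) 0 := by
      have hfd : HasFDerivAt (F 0) (fderiv ℝ (F 0) (z 0)) ((fun t => ρ 0 t x) 0) := by
        rw [show (fun t => ρ 0 t x) 0 = z 0 from h0]
        exact hFdiff0.hasFDerivAt
      have := hfd.comp_hasDerivAt (0:ℝ) (by rw [hz0] at *; exact hρz 0 x)
      simpa [hz0, Function.comp_def, hA] using this
    have h4 := ((hρbard N).hasDerivAt).clm_apply hfz
    have h5 : F 0 (ρ 0 0 x) = z N := by rw [h0, hF0zN]
    rw [h5, hρbar0, show deriv (ρbar N) 0 = B N from rfl, hBA] at h4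
    simpa [sub_eq_add_neg, add_comm] using h4
  refine ⟨fun i _ => (hlayer i).differentiableAt, hnet.differentiableAt, ?_⟩
  rw [hnet.deriv]
  have hterm : ∀ i ∈ Finset.range N,
      fderiv ℝ (F (i + 1)) (z (i + 1))
          (deriv (fun t => ρbar (i + 1) t (f i (ρ i t (z i)))) 0) =
      fderiv ℝ (F i) (z i) (A i (z i)) - fderiv ℝ (F (i+1)) (z (i+1)) (A (i+1) (z (i+1))) := by
    intro i hi
    rw [(hlayer i).deriv, hchain i (Finset.mem_range.mp hi)]
    simp [map_sub]
  rw [Finset.sum_congr rfl hterm, Finset.sum_range_sub']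
  have hFN' : fderiv ℝ (F N) (z N) = ContinuousLinearMap.id ℝ (V N) := by
    rw [hFN]; exact fderiv_id'
  rw [hFN']
  rfl
end
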